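/- arXiv:0808.1821 — 2 statements merged into one kernel-verified Lean document; each statement's English description precedes it below -/
import Mathlib

section
/- Let Φ=(f_1,…,f_n) be a polynomial automorphism of K^n, deg_1 the standard homogeneous degree, d_i = deg_1(f_i), and ∇ = d_1 + ⋯ + d_n − n (the parachute). Then for every polynomial P ∈ K[x_1,…,x_n] and every k ≥ 0: deg_1(P∘Φ) ≥ deg_1((∂^k P/∂x_n^k)∘Φ) + k·d_n − k·∇. -/
open MvPolynomial AddMonoidAlgebra


section Aux

variable {K : Type*} [CommRing K] {σ : Type*}

private lemma chain_rule' [Fintype σ] [DecidableEq σ]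
    (f : σ → MvPolynomial σ K) (j : σ) (Q : MvPolynomial σ K) :
    pderiv j (aeval f Q) = ∑ i, aeval f (pderiv i Q) * pderiv j (f i) := by
  induction Q using MvPolynomial.induction_on with
  | C a => simp only [aeval_C, algebraMap_eq, pderiv_C, map_zero, zero_mul,
      Finset.sum_const_zero]
  | add p q hp hq =>
    simp only [map_add, hp, hq, add_mul, Finset.sum_add_distrib]
  | mul_X p i0 hp =>
    rw [map_mul, aeval_X, pderiv_mul, hp, Finset.sum_mul]
    have : ∀ i : σ, pderiv i (p * X i0) = pderiv i p * X i0 + p * if i0 = i then 1 else 0 := by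
      intro i; rw [pderiv_mul, pderiv_X, Pi.single_apply]
    simp only [this, map_add, map_mul, aeval_X, add_mul]
    rw [Finset.sum_add_distrib]
    congr 1
    · exact Finset.sum_congr rfl fun i _ => by ring
    · rw [Finset.sum_eq_single i0]
      · simp [mul_comm]
      · intro b _ hb; simp [Ne.symm hb]
      · intro h; exact absurd (Finset.mem_univ i0) h

private lemma tdeg_pderiv_le [DecidableEq σ] (i : σ) (p : MvPolynomial σ K) :
    (pderiv i p).totalDegree ≤ p.totalDegree - 1 := by
  conv_lhs => rw [p.as_sum]
  rw [map_sum]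
  apply totalDegree_finsetSum_le
  intro s hs
  rw [pderiv_monomial]
  rcases Nat.eq_zero_or_pos (s i) with h | h
  · simp [h]
  · refine (totalDegree_monomial_le _ _).trans ?_
    have hle : Finsupp.single i 1 ≤ s := by
      rw [Finsupp.single_le_iff]; exact h
    have hsum : ((s - Finsupp.single i 1).sum fun _ e => e) + 1 = s.sum fun _ e => e := by
      have := Finsupp.sum_add_index' (f := s - Finsupp.single i 1) (g := Finsupp.single i 1)
        (h := fun (_ : σ) (e : ℕ) => e) (fun _ => rfl) (fun _ _ _ => rfl)
      rw [tsub_add_cancel_of_le hle] at this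
      simp [this, Finsupp.sum_single_index]
    have hd : (s.sum fun _ e => e) ≤ p.totalDegree := le_totalDegree hs
    show ((s - Finsupp.single i 1).sum fun _ e => e) ≤ _
    omega

private lemma tdeg_det_le {m : Type*} [Fintype m] [DecidableEq m]
    (M : Matrix m m (MvPolynomial σ K)) (w : m → ℕ)
    (h : ∀ a b, (M a b).totalDegree ≤ w a) :
    M.det.totalDegree ≤ ∑ a, w a := by
  rw [Matrix.det_apply']
  apply totalDegree_finsetSum_le
  intro τ _
  refine (totalDegree_mul _ _).trans ?_
  have h1 : ((Equiv.Perm.sign τ : ℤ) : MvPolynomial σ K).totalDegree = 0 := by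
    rw [← map_intCast (C : K →+* MvPolynomial σ K)]
    exact totalDegree_C _
  rw [h1, zero_add]
  refine (totalDegree_finset_prod _ _).trans ?_
  calc ∑ i, (M (τ i) i).totalDegree ≤ ∑ i, w (τ i) :=
        Finset.sum_le_sum fun i _ => h (τ i) i
    _ = ∑ a, w a := Equiv.sum_comp τ w

private lemma eq_C_of_tdeg0 (p : MvPolynomial σ K) (h : p.totalDegree = 0) :
    p = C (coeff 0 p) := by
  classical
  ext m
  rw [coeff_C]
  split_ifs with hm
  · rw [← hm]
  · by_contra hc
    have hm' := (totalDegree_eq_zero_iff σ p).1 h m (mem_support_iff.2 hc)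
    apply hm
    ext x
    exact (hm' x).symm

private noncomputable def Dfun (σ : Type*) [LinearOrder σ] : (σ →₀ ℕ) → ℕ ×ₗ Lex (σ →₀ ℕ) :=
  fun s => toLex (s.sum fun _ e => e, toLex s)

private lemma Dfun_inj [LinearOrder σ] : Function.Injective (Dfun σ) := by
  intro a b h
  have := congrArg (fun x => ofLex (ofLex x).2) h
  simpa [Dfun] using this

private lemma Dfun_add [LinearOrder σ] (a b : σ →₀ ℕ) :
    Dfun σ (a + b) = Dfun σ a + Dfun σ b := by
  unfold Dfun
  have h : ((a + b).sum fun _ e => e) = (a.sum fun _ e => e) + (b.sum fun _ e => e) :=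
    Finsupp.sum_add_index' (fun _ => rfl) (fun _ _ _ => rfl)
  rw [h]; rfl

private lemma fst_supDegree [LinearOrder σ] (p : MvPolynomial σ K) (hp : p ≠ 0) :
    (ofLex (p.supDegree (Dfun σ))).1 = p.totalDegree := by
  obtain ⟨a, ha, he⟩ := exists_supDegree_mem_support (Dfun σ) hp
  apply le_antisymm
  · rw [he]; exact le_totalDegree ha
  · apply Finset.sup_le
    intro s hs
    have h1 : Dfun σ s ≤ p.supDegree (Dfun σ) := Finset.le_sup hs
    rw [he] at h1
    rcases Prod.Lex.le_iff.1 h1 with h | ⟨h, -⟩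
    · rw [he]; exact le_of_lt h
    · rw [he]; exact le_of_eq h

private lemma tdeg_mul_eq [IsDomain K] [LinearOrder σ] (p q : MvPolynomial σ K)
    (hp : p ≠ 0) (hq : q ≠ 0) :
    (p * q).totalDegree = p.totalDegree + q.totalDegree := by
  have hmul : (p * q).supDegree (Dfun σ) = p.supDegree (Dfun σ) + q.supDegree (Dfun σ) := by
    apply supDegree_mul Dfun_inj Dfun_add ?_ hp hq
    exact mul_ne_zero ((leadingCoeff_ne_zero Dfun_inj).2 hp) ((leadingCoeff_ne_zero Dfun_inj).2 hq)
  have hpq : p * q ≠ 0 := mul_ne_zero hp hq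
  rw [← fst_supDegree p hp, ← fst_supDegree q hq, ← fst_supDegree (p*q) hpq, hmul]
  rfl

end Aux

section Step

variable {K : Type*} [Field K] {n : ℕ}

private lemma parachute_step (f : Fin (n + 1) → MvPolynomial (Fin (n + 1)) K)
    (hf : Function.Bijective
      ⇑(aeval f : MvPolynomial (Fin (n + 1)) K →ₐ[K] MvPolynomial (Fin (n + 1)) K))
    (P : MvPolynomial (Fin (n + 1)) K)
    (hQ : aeval f (pderiv (Fin.last n) P) ≠ 0) :
    ((aeval f (pderiv (Fin.last n) P)).totalDegree : ℤ) + ((f (Fin.last n)).totalDegree : ℤ)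
      ≤ ((aeval f P).totalDegree : ℤ)
        + ((∑ i, ((f i).totalDegree : ℤ)) - (n + 1)) := by
  classical
  set L := Fin.last n with hL
  -- inverse system
  have hsur := hf.2
  choose g hg using fun i => hsur (X i)
  have hfg : ∀ R : MvPolynomial (Fin (n + 1)) K, aeval f (aeval g R) = R := by
    intro R
    rw [aeval_eq_bind₁, aeval_eq_bind₁, bind₁_bind₁]
    have hXg : (fun i => bind₁ f (g i)) = (X : Fin (n+1) → MvPolynomial (Fin (n+1)) K) := by
      funext i; rw [← aeval_eq_bind₁]; exact hg i
    rw [hXg, bind₁_X_left]; rfl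
  have hgf : ∀ R : MvPolynomial (Fin (n + 1)) K, aeval g (aeval f R) = R := fun R =>
    hf.1 (by rw [hfg])
  -- Jacobian matrices
  set J : Matrix (Fin (n+1)) (Fin (n+1)) (MvPolynomial (Fin (n+1)) K) :=
    Matrix.of fun i j => pderiv j (f i) with hJ
  set A : Matrix (Fin (n+1)) (Fin (n+1)) (MvPolynomial (Fin (n+1)) K) :=
    Matrix.of fun i j => aeval f (pderiv j (g i)) with hA
  have hAJ : A * J = 1 := by
    ext i j
    rw [Matrix.mul_apply]
    have : ∀ l, A i l * J l j = aeval f (pderiv l (g i)) * pderiv j (f l) := fun l => rfl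
    simp only [this]
    rw [← chain_rule' f j (g i), hg i, Matrix.one_apply]
    rw [pderiv_X, Pi.single_apply]
  have hJA : J * A = 1 := mul_eq_one_comm.mp hAJ
  have hdet1 : A.det * J.det = 1 := by rw [← Matrix.det_mul, hAJ, Matrix.det_one]
  have hJdet_ne : J.det ≠ 0 := by
    intro h0; rw [h0, mul_zero] at hdet1; exact one_ne_zero hdet1.symm
  have hAdet_ne : A.det ≠ 0 := by
    intro h0; rw [h0, zero_mul] at hdet1; exact one_ne_zero hdet1.symm
  have hdeg0 : J.det.totalDegree = 0 := by
    have := tdeg_mul_eq A.det J.det hAdet_ne hJdet_ne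
    rw [hdet1, totalDegree_one] at this
    omega
  set c : K := MvPolynomial.coeff 0 J.det with hc
  have hJc : J.det = C c := eq_C_of_tdeg0 _ hdeg0
  have hcne : c ≠ 0 := fun h => hJdet_ne (by rw [hJc, h, map_zero])
  -- adjugate identity
  have hAdj : J.det • A = J.adjugate := by
    calc J.det • A = (J.adjugate * J) * A := by rw [Matrix.adjugate_mul, Matrix.smul_mul,
          Matrix.one_mul]
    _ = J.adjugate * (J * A) := by rw [Matrix.mul_assoc]
    _ = J.adjugate := by rw [hJA, Matrix.mul_one]
  have hAentry : ∀ j, A j L = C c⁻¹ * J.adjugate j L := by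
    intro j
    have h1 : J.det * A j L = J.adjugate j L := by
      have := congrFun (congrFun (congrArg (fun M => (M : Matrix _ _ _)) hAdj) j) L
      simpa [Matrix.smul_apply, smul_eq_mul] using this
    rw [← h1, hJc, ← mul_assoc, ← map_mul, inv_mul_cancel₀ hcne, map_one, one_mul]
  -- key identity
  have key : aeval f (pderiv L P) = ∑ j, pderiv j (aeval f P) * A j L := by
    have h1 := chain_rule' g L (aeval f P)
    rw [hgf P] at h1
    calc aeval f (pderiv L P)
        = aeval f (∑ j, aeval g (pderiv j (aeval f P)) * pderiv L (g j)) := by rw [h1]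
      _ = ∑ j, aeval f (aeval g (pderiv j (aeval f P))) * aeval f (pderiv L (g j)) := by
          rw [map_sum]; simp only [map_mul]
      _ = ∑ j, pderiv j (aeval f P) * A j L := by
          refine Finset.sum_congr rfl fun j _ => ?_
          rw [hfg]; rfl
  -- each component has positive degree
  have hD1 : ∀ a, 1 ≤ (f a).totalDegree := by
    intro a
    by_contra h
    have h0 : (f a).totalDegree = 0 := by omega
    have hfa : f a = C (MvPolynomial.coeff 0 (f a)) := eq_C_of_tdeg0 _ h0
    have hrow : ∀ b, J a b = 0 := by
      intro b
      show pderiv b (f a) = 0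
      rw [hfa, pderiv_C]
    have : J.det = 0 := Matrix.det_eq_zero_of_row_eq_zero a hrow
    exact hJdet_ne this
  -- adjugate degree bound
  set w : Fin (n+1) → ℕ := fun a => if a = L then 0 else (f a).totalDegree - 1 with hw
  set S : ℕ := ∑ a, w a with hS
  have hadjdeg : ∀ j, (J.adjugate j L).totalDegree ≤ S := by
    intro j
    rw [Matrix.adjugate_apply]
    apply tdeg_det_le _ w
    intro a b
    by_cases ha : a = L
    · subst ha
      rw [Matrix.updateRow_self]
      simp only [hw, if_pos rfl]
      rcases eq_or_ne b j with h | h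
      · simp [Pi.single_apply, h]
      · simp [Pi.single_apply, Ne.symm h]
    · rw [Matrix.updateRow_ne ha]
      simp only [hw, if_neg ha]
      exact tdeg_pderiv_le b (f a)
  -- \deg(aeval f P) ≥ 1
  have hDpos : 1 ≤ (aeval f P).totalDegree := by
    by_contra h
    have h0 : (aeval f P).totalDegree = 0 := by omega
    have hP : P = C (MvPolynomial.coeff 0 (aeval f P)) := by
      conv_lhs => rw [← hgf P, eq_C_of_tdeg0 _ h0]
      rw [aeval_C, algebraMap_eq]
    apply hQ
    rw [hP, pderiv_C, map_zero]
  -- main ℕ bound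
  have hmain : (aeval f (pderiv L P)).totalDegree ≤ ((aeval f P).totalDegree - 1) + S := by
    rw [key]
    apply totalDegree_finsetSum_le
    intro j _
    refine (totalDegree_mul _ _).trans ?_
    apply add_le_add (tdeg_pderiv_le j (aeval f P))
    rw [hAentry j]
    refine (totalDegree_mul _ _).trans ?_
    rw [totalDegree_C, zero_add]
    exact hadjdeg j
  -- cast to ℤ and conclude
  have hcast : ((aeval f (pderiv L P)).totalDegree : ℤ)
      ≤ ((aeval f P).totalDegree : ℤ) - 1 + (S : ℤ) := by
    have := (Nat.cast_le (α := ℤ)).2 hmain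
    push_cast [Nat.cast_sub hDpos] at this
    linarith
  have hScast : (S : ℤ) = (∑ a, ((f a).totalDegree : ℤ)) - ((f L).totalDegree : ℤ) - n := by
    rw [hS, Nat.cast_sum]
    have h1 : ∀ a : Fin (n+1), ((w a : ℤ)) =
        (((f a).totalDegree : ℤ) - 1) - (if a = L then ((f a).totalDegree : ℤ) - 1 else 0) := by
      intro a
      by_cases h : a = L
      · simp only [hw, if_pos h, Nat.cast_zero]
        ring
      · simp only [hw, if_neg h]
        rw [Nat.cast_sub (hD1 a)]
        push_cast
        ring
    rw [Finset.sum_congr rfl fun a _ => h1 a, Finset.sum_sub_distrib,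
      Finset.sum_ite_eq' Finset.univ L (fun a => ((f a).totalDegree : ℤ) - 1),
      if_pos (Finset.mem_univ L), Finset.sum_sub_distrib]
    simp only [Finset.sum_const, Finset.card_univ, Fintype.card_fin, nsmul_eq_mul, mul_one]
    push_cast
    ring
  rw [hScast] at hcast
  linarith

end Step



/-- Proposition (parachute inequality): with `∇ = d₁ + ⋯ + dₙ - n`, for every
polynomial `P` and every `k ≥ 0`,
`deg₁(P∘Φ) ≥ deg₁((∂^k P/∂xₙ^k)∘Φ) + k·dₙ - k·∇`.  Here there are `n+1` variables,
`xₙ` is the last one, and the inequality is stated over `ℤ` under the (vacuity-removing)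
hypothesis that `(∂^k P/∂xₙ^k)∘Φ ≠ 0` (its degree would otherwise be `-∞`). -/
theorem stmt14 {K : Type*} [Field K] [IsAlgClosed K] [CharZero K]
    {n : ℕ} (f : Fin (n + 1) → MvPolynomial (Fin (n + 1)) K)
    (hf : Function.Bijective
      ⇑(aeval f : MvPolynomial (Fin (n + 1)) K →ₐ[K] MvPolynomial (Fin (n + 1)) K))
    (P : MvPolynomial (Fin (n + 1)) K) (k : ℕ)
    (hQ : aeval f ((⇑(pderiv (Fin.last n)))^[k] P) ≠ 0) :
    ((aeval f ((⇑(pderiv (Fin.last n)))^[k] P)).totalDegree : ℤ)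
        + (k : ℤ) * ((f (Fin.last n)).totalDegree : ℤ)
        - (k : ℤ) * ((∑ i, ((f i).totalDegree : ℤ)) - (n + 1))
      ≤ ((aeval f P).totalDegree : ℤ) := by
  revert hQ
  induction k with
  | zero =>
    intro hQ
    simp only [Function.iterate_zero, id_eq, Nat.cast_zero, zero_mul, sub_zero, add_zero]
    exact le_refl _
  | succ k ih =>
    intro hQ
    rw [Function.iterate_succ_apply'] at hQ ⊢
    have hQk : aeval f ((⇑(pderiv (Fin.last n)))^[k] P) ≠ 0 := by
      intro h0
      have hz : ((⇑(pderiv (Fin.last n)))^[k] P) = 0 := hf.1 (by rw [h0, map_zero])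
      apply hQ
      rw [hz, map_zero, map_zero]
    have ih' := ih hQk
    have hstep := parachute_step f hf ((⇑(pderiv (Fin.last n)))^[k] P) hQ
    push_cast
    push_cast at ih' hstep
    linarith
end

section
/- Let deg_1 be a p.w.h. degree on K[x_1,…,x_n] and let R be a deg_1-homogeneous irreducible nonconstant polynomial. If there exists a nonzero locally nilpotent K-derivation D of K[x_1,…,x_n] with D(R) = 0, then the quotient ring A = K[x_1,…,x_n]/(R) admits a nonzero weighted homogeneous locally nilpotent K-derivation (homogeneous with respect to the grading induced by deg_1 on A). -/
open MvPolynomial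

/-- A derivation is locally nilpotent if every element is killed by some iterate. -/
def IsLND {K A : Type*} [CommSemiring K] [CommRing A] [Algebra K A]
    (D : Derivation K A A) : Prop :=
  ∀ a : A, ∃ k : ℕ, (⇑D)^[k] a = 0

namespace Stmt17Aux

variable {K : Type*} [Field K] {n : ℕ}

/-- integer-indexed weighted homogeneous component -/
noncomputable def cpt (w : Fin n → ℕ) (z : ℤ) (p : MvPolynomial (Fin n) K) :
    MvPolynomial (Fin n) K :=
  if 0 ≤ z then weightedHomogeneousComponent w z.toNat p else 0

variable {w : Fin n → ℕ}

lemma coeff_cpt (z : ℤ) (p : MvPolynomial (Fin n) K) (d : Fin n →₀ ℕ) :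
    coeff d (cpt w z p) = if ((Finsupp.weight w d : ℕ) : ℤ) = z then coeff d p else 0 := by
  classical
  unfold cpt
  split_ifs with h1 h2 h2
  · rw [coeff_weightedHomogeneousComponent, if_pos]
    omega
  · rw [coeff_weightedHomogeneousComponent, if_neg]
    omega
  · omega
  · simp

lemma cpt_neg {z : ℤ} (hz : z < 0) (p : MvPolynomial (Fin n) K) : cpt w z p = 0 := by
  unfold cpt; rw [if_neg (by omega)]

lemma cpt_add (z : ℤ) (p q : MvPolynomial (Fin n) K) :
    cpt w z (p + q) = cpt w z p + cpt w z q := by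
  classical
  ext d; simp only [coeff_cpt, coeff_add]; split_ifs <;> simp

lemma cpt_sub (z : ℤ) (p q : MvPolynomial (Fin n) K) :
    cpt w z (p - q) = cpt w z p - cpt w z q := by
  classical
  ext d; simp only [coeff_cpt, coeff_sub]; split_ifs <;> simp

lemma cpt_zero (z : ℤ) : cpt w z (0 : MvPolynomial (Fin n) K) = 0 := by
  classical
  ext d; simp only [coeff_cpt, coeff_zero]; split_ifs <;> simp

lemma cpt_smul (z : ℤ) (c : K) (p : MvPolynomial (Fin n) K) :
    cpt w z (c • p) = c • cpt w z p := by
  classical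
  ext d; simp only [coeff_cpt, coeff_smul, smul_eq_mul]; split_ifs <;> simp

lemma cpt_sum {ι : Type*} (s : Finset ι) (f : ι → MvPolynomial (Fin n) K) (z : ℤ) :
    cpt w z (∑ i ∈ s, f i) = ∑ i ∈ s, cpt w z (f i) := by
  classical
  induction s using Finset.induction_on with
  | empty => simp [cpt_zero]
  | insert _ _ hx ih => rw [Finset.sum_insert hx, Finset.sum_insert hx, cpt_add, ih]

lemma cpt_of_isWH {m : ℕ} {p : MvPolynomial (Fin n) K} (hp : p.IsWeightedHomogeneous w m)
    (z : ℤ) : cpt w z p = if z = (m : ℤ) then p else 0 := by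
  classical
  ext d
  rw [coeff_cpt]
  by_cases hc : coeff d p = 0
  · split_ifs <;> simp [hc]
  · have := hp hc
    split_ifs <;> simp_all <;> omega

lemma cpt_isWH (z : ℤ) (p : MvPolynomial (Fin n) K) :
    (cpt w z p).IsWeightedHomogeneous w z.toNat := by
  unfold cpt
  split_ifs
  · exact weightedHomogeneousComponent_isWeightedHomogeneous _ _
  · exact isWeightedHomogeneous_zero _ _ _

lemma cpt_cpt (z b : ℤ) (p : MvPolynomial (Fin n) K) (hb : 0 ≤ b) :
    cpt w z (cpt w b p) = if z = b then cpt w b p else 0 := by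
  rw [cpt_of_isWH (cpt_isWH b p) z]
  congr 1
  simp only [eq_iff_iff]
  omega

lemma cpt_ne_zero_nonneg {z : ℤ} {p : MvPolynomial (Fin n) K} (h : cpt w z p ≠ 0) : 0 ≤ z := by
  by_contra hz
  exact h (cpt_neg (by omega) p)

lemma cpt_monomial_mul (d : Fin n →₀ ℕ) (c : K) (q : MvPolynomial (Fin n) K) (z : ℤ) :
    cpt w (((Finsupp.weight w d : ℕ) : ℤ) + z) (monomial d c * q) =
      monomial d c * cpt w z q := by
  classical
  ext e
  rw [coeff_cpt, coeff_monomial_mul', coeff_monomial_mul', coeff_cpt]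
  by_cases hle : d ≤ e
  · have hw : (Finsupp.weight w e : ℕ) = (Finsupp.weight w d : ℕ) + (Finsupp.weight w (e - d) : ℕ) := by
      conv_lhs => rw [← tsub_add_cancel_of_le hle]
      rw [map_add]
      ring
    rw [if_pos hle, if_pos hle]
    split_ifs with h1 h2 h2 <;> try rfl
    · omega
    · omega
    · simp
  · rw [if_neg hle, if_neg hle]
    simp

lemma cpt_isWH_mul {m₀ : ℕ} {R : MvPolynomial (Fin n) K} (hR : R.IsWeightedHomogeneous w m₀)
    (q : MvPolynomial (Fin n) K) (z : ℤ) :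
    cpt w ((m₀ : ℤ) + z) (R * q) = R * cpt w z q := by
  classical
  conv_lhs => rw [← support_sum_monomial_coeff R, Finset.sum_mul, cpt_sum]
  conv_rhs => rw [← support_sum_monomial_coeff R, Finset.sum_mul]
  apply Finset.sum_congr rfl
  intro d hd
  have hwd : (Finsupp.weight w d : ℕ) = m₀ := hR (mem_support_iff.mp hd)
  rw [← hwd, cpt_monomial_mul]

variable (w) in
/-- the degree-`r` weighted homogeneous component of a derivation `D` -/
noncomputable def dcomp (D : Derivation K (MvPolynomial (Fin n) K) (MvPolynomial (Fin n) K))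
    (r : ℤ) : Derivation K (MvPolynomial (Fin n) K) (MvPolynomial (Fin n) K) :=
  mkDerivation K (fun i => cpt w ((w i : ℤ) + r) (D (X i)))

lemma dcomp_X (D : Derivation K (MvPolynomial (Fin n) K) (MvPolynomial (Fin n) K)) (r : ℤ)
    (i : Fin n) : dcomp w D r (X i) = cpt w ((w i : ℤ) + r) (D (X i)) :=
  mkDerivation_X _ _ _

lemma dcomp_apply (D : Derivation K (MvPolynomial (Fin n) K) (MvPolynomial (Fin n) K)) (r : ℤ)
    {m : ℕ} {p : MvPolynomial (Fin n) K} (hp : p.IsWeightedHomogeneous w m) :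
    dcomp w D r p = cpt w ((m : ℤ) + r) (D p) := by
  classical
  have hD : D = mkDerivation K (fun i => D (X i)) := derivation_ext (by simp)
  conv_lhs => rw [← support_sum_monomial_coeff p]
  conv_rhs => rw [← support_sum_monomial_coeff p]
  rw [map_sum, map_sum, cpt_sum]
  apply Finset.sum_congr rfl
  intro d hd
  have hwd : (Finsupp.weight w d : ℕ) = m := hp (mem_support_iff.mp hd)
  -- monomial case
  have hmk : ∀ (f : Fin n → MvPolynomial (Fin n) K),
      mkDerivation K f (monomial d (coeff d p)) =
        coeff d p • ∑ i ∈ d.support,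
          monomial (d - Finsupp.single i 1) ((d i : K)) * f i := by
    intro f
    rw [mkDerivation_monomial]
    congr 1
  rw [dcomp, hmk]
  conv_rhs => rw [hD, hmk]
  rw [cpt_smul, cpt_sum]
  congr 1
  apply Finset.sum_congr rfl
  intro i hi
  have hsub : d - Finsupp.single i 1 + Finsupp.single i 1 = d := by
    apply tsub_add_cancel_of_le
    rw [Finsupp.single_le_iff]
    have := Finsupp.mem_support_iff.mp hi
    omega
  have hwsub : (Finsupp.weight w (d - Finsupp.single i 1) : ℕ) + w i = m := by
    have : (Finsupp.weight w (d - Finsupp.single i 1)) + Finsupp.weight w (Finsupp.single i 1)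
        = Finsupp.weight w d := by rw [← map_add, hsub]
    have hs : (Finsupp.weight w) (Finsupp.single i 1) = w i := by
      simp [Finsupp.weight_apply, Finsupp.sum_single_index]
    omega
  have : ((m : ℤ) + r) = ((Finsupp.weight w (d - Finsupp.single i 1) : ℕ) : ℤ) + ((w i : ℤ) + r) := by
    omega
  rw [this, cpt_monomial_mul]

lemma cpt_natCast (m : ℕ) (p : MvPolynomial (Fin n) K) :
    cpt w (m : ℤ) p = weightedHomogeneousComponent w m p := by
  unfold cpt
  rw [if_pos (by omega), Int.toNat_natCast]

section D

variable (D : Derivation K (MvPolynomial (Fin n) K) (MvPolynomial (Fin n) K))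

lemma dcomp_ne_zero_bound {r : ℤ} (h : dcomp w D r ≠ 0) :
    -((Finset.univ.sup w : ℕ) : ℤ) ≤ r := by
  have : ∃ i, dcomp w D r (X i) ≠ 0 := by
    by_contra hc
    push_neg at hc
    exact h (derivation_ext (by simpa using hc))
  obtain ⟨i, hi⟩ := this
  rw [dcomp_X] at hi
  have h1 : (0 : ℤ) ≤ (w i : ℤ) + r := cpt_ne_zero_nonneg hi
  have h2 : w i ≤ Finset.univ.sup w := by
    rcases n with - | n
    · exact absurd i.2 (by omega)
    · exact Finset.le_sup (Finset.mem_univ i)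
  omega

lemma exists_rmin (hD0 : D ≠ 0) :
    ∃ r : ℤ, dcomp w D r ≠ 0 ∧ ∀ r' < r, dcomp w D r' = 0 := by
  classical
  have hex : ∃ r : ℤ, dcomp w D r ≠ 0 := by
    by_contra hc
    push_neg at hc
    apply hD0
    apply derivation_ext
    intro i
    have : ∀ m : ℕ, weightedHomogeneousComponent w m (D (X i)) = 0 := by
      intro m
      have h1 := hc ((m : ℤ) - (w i : ℤ))
      have h2 : dcomp w D ((m : ℤ) - (w i : ℤ)) (X i) = 0 := by rw [h1]; rfl
      rw [dcomp_X] at h2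
      have h3 : (w i : ℤ) + ((m : ℤ) - (w i : ℤ)) = (m : ℤ) := by omega
      rw [h3, cpt_natCast] at h2
      exact h2
    rw [← sum_weightedHomogeneousComponent w (D (X i))]
    simp only [this]
    exact finsum_zero
  set M' : ℕ := Finset.univ.sup w with hM'
  have hT : ∃ k : ℕ, dcomp w D ((k : ℤ) - (M' : ℤ)) ≠ 0 := by
    obtain ⟨r, hr⟩ := hex
    have hb := dcomp_ne_zero_bound D hr
    refine ⟨(r + M').toNat, ?_⟩
    have : ((r + (M' : ℤ)).toNat : ℤ) - (M' : ℤ) = r := by omega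
    rw [this]
    exact hr
  refine ⟨(Nat.find hT : ℤ) - M', Nat.find_spec hT, ?_⟩
  intro r' hr'
  by_contra hc
  have hb := dcomp_ne_zero_bound D hc
  have hk : dcomp w D (((r' + (M' : ℤ)).toNat : ℤ) - (M' : ℤ)) ≠ 0 := by
    have : ((r' + (M' : ℤ)).toNat : ℤ) - (M' : ℤ) = r' := by omega
    rw [this]; exact hc
  have := Nat.find_min hT (m := (r' + (M' : ℤ)).toNat) (by omega)
  exact this hk

variable (w) in
/-- all weighted components below `b` vanish -/
def lowB (q : MvPolynomial (Fin n) K) (b : ℤ) : Prop := ∀ z : ℤ, z < b → cpt w z q = 0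

lemma lowB_support {q : MvPolynomial (Fin n) K} {b : ℤ} (hq : lowB w q b)
    {d : Fin n →₀ ℕ} (hd : d ∈ q.support) : b ≤ ((Finsupp.weight w d : ℕ) : ℤ) := by
  by_contra hc
  have h0 := hq _ (by omega : ((Finsupp.weight w d : ℕ) : ℤ) < b)
  have := coeff_cpt (w := w) ((Finsupp.weight w d : ℕ) : ℤ) q d
  rw [h0, if_pos rfl] at this
  exact mem_support_iff.mp hd this.symm

variable {r : ℤ} (hmin : ∀ r' < r, dcomp w D r' = 0)

include hmin in
lemma lowB_D {q : MvPolynomial (Fin n) K} {b : ℤ} (hq : lowB w q b) :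
    lowB w (D q) (b + r) := by
  intro z hz
  conv_lhs => rw [← support_sum_monomial_coeff q, map_sum, cpt_sum]
  apply Finset.sum_eq_zero
  intro d hd
  have hWH : (monomial d (coeff d q)).IsWeightedHomogeneous w (Finsupp.weight w d) :=
    isWeightedHomogeneous_monomial w d _ rfl
  have h1 := dcomp_apply D (z - ((Finsupp.weight w d : ℕ) : ℤ)) hWH
  have h2 : ((Finsupp.weight w d : ℕ) : ℤ) + (z - ((Finsupp.weight w d : ℕ) : ℤ)) = z := by omega
  rw [h2] at h1
  rw [← h1, hmin _ (by have := lowB_support hq hd; omega)]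
  rfl

include hmin in
lemma cpt_D {q : MvPolynomial (Fin n) K} {b : ℤ} (hq : lowB w q b) :
    cpt w (b + r) (D q) = dcomp w D r (cpt w b q) := by
  by_cases hb : 0 ≤ b
  · set q1 := cpt w b q with hq1
    have hWH : q1.IsWeightedHomogeneous w b.toNat := cpt_isWH b q
    have hq2 : lowB w (q - q1) (b + 1) := by
      intro z hz
      rw [cpt_sub, cpt_cpt _ _ _ hb]
      rcases lt_or_eq_of_le (by omega : z ≤ b) with h | h
      · rw [hq z h, if_neg (by omega)]; simp
      · rw [if_pos h, h]; simp
    have hsplit : q = q1 + (q - q1) := by ring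
    conv_lhs => rw [hsplit, map_add, cpt_add]
    rw [lowB_D D hmin hq2 _ (by omega), add_zero]
    have := dcomp_apply D r hWH
    rw [this]
    congr 1
    omega
  · rw [cpt_neg (by omega) q, map_zero]
    have hq0 : lowB w q 0 := fun z hz => cpt_neg hz q
    exact lowB_D D hmin hq0 _ (by omega)

include hmin in
lemma iter_cpt {p : MvPolynomial (Fin n) K} {m : ℕ} (hp : p.IsWeightedHomogeneous w m) (k : ℕ) :
    lowB w ((⇑D)^[k] p) ((m : ℤ) + k * r) ∧
      cpt w ((m : ℤ) + k * r) ((⇑D)^[k] p) = (⇑(dcomp w D r))^[k] p := by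
  induction k with
  | zero =>
    constructor
    · intro z hz
      simp only [Nat.cast_zero, zero_mul, add_zero] at hz
      simp only [Function.iterate_zero, id_eq]
      rw [cpt_of_isWH hp, if_neg (by omega)]
    · simp only [Function.iterate_zero, id_eq, Nat.cast_zero, zero_mul, add_zero]
      rw [cpt_of_isWH hp, if_pos rfl]
  | succ k ih =>
    have harith : (m : ℤ) + (k + 1 : ℕ) * r = ((m : ℤ) + k * r) + r := by push_cast; ring
    rw [Function.iterate_succ_apply', Function.iterate_succ_apply', harith]
    exact ⟨lowB_D D hmin ih.1, by rw [cpt_D D hmin ih.1, ih.2]⟩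

end D

lemma der_iter_zero (Δ : Derivation K (MvPolynomial (Fin n) K) (MvPolynomial (Fin n) K))
    (k : ℕ) : (⇑Δ)^[k] 0 = 0 :=
  Function.iterate_fixed (map_zero Δ) k

lemma der_iter_add (Δ : Derivation K (MvPolynomial (Fin n) K) (MvPolynomial (Fin n) K))
    (k : ℕ) (x y : MvPolynomial (Fin n) K) :
    (⇑Δ)^[k] (x + y) = (⇑Δ)^[k] x + (⇑Δ)^[k] y := by
  induction k generalizing x y with
  | zero => rfl
  | succ k ih => simp only [Function.iterate_succ_apply, map_add, ih]

lemma der_iter_sum (Δ : Derivation K (MvPolynomial (Fin n) K) (MvPolynomial (Fin n) K))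
    (k : ℕ) {ι : Type*} (s : Finset ι) (f : ι → MvPolynomial (Fin n) K) :
    (⇑Δ)^[k] (∑ i ∈ s, f i) = ∑ i ∈ s, (⇑Δ)^[k] (f i) := by
  classical
  induction s using Finset.induction_on with
  | empty => simpa using der_iter_zero Δ k
  | insert _ _ hx ih => rw [Finset.sum_insert hx, Finset.sum_insert hx, der_iter_add, ih]

lemma der_iter_zero_of_le (Δ : Derivation K (MvPolynomial (Fin n) K) (MvPolynomial (Fin n) K))
    {j k : ℕ} (hjk : j ≤ k) {x : MvPolynomial (Fin n) K} (hx : (⇑Δ)^[j] x = 0) :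
    (⇑Δ)^[k] x = 0 := by
  have : k = (k - j) + j := by omega
  rw [this, Function.iterate_add_apply, hx, der_iter_zero]

lemma dcomp_min_LND (D : Derivation K (MvPolynomial (Fin n) K) (MvPolynomial (Fin n) K))
    {r : ℤ} (hmin : ∀ r' < r, dcomp w D r' = 0) (hDl : IsLND D) : IsLND (dcomp w D r) := by
  intro a
  classical
  have hkey : ∀ m : ℕ, ∃ k, (⇑(dcomp w D r))^[k] (weightedHomogeneousComponent w m a) = 0 := by
    intro m
    obtain ⟨k, hk⟩ := hDl (weightedHomogeneousComponent w m a)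
    refine ⟨k, ?_⟩
    have := (iter_cpt D hmin (weightedHomogeneousComponent_isWeightedHomogeneous m a) k).2
    rw [hk, cpt_zero] at this
    exact this.symm
  choose f hf using hkey
  have hfin := weightedHomogeneousComponent_finsupp (w := w) a
  refine ⟨hfin.toFinset.sup f, ?_⟩
  have ha : a = ∑ m ∈ hfin.toFinset, weightedHomogeneousComponent w m a := by
    conv_lhs => rw [← sum_weightedHomogeneousComponent w a]
    exact finsum_eq_sum _ hfin
  have h2 : (⇑(dcomp w D r))^[hfin.toFinset.sup f]
      (∑ m ∈ hfin.toFinset, weightedHomogeneousComponent w m a) = 0 := by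
    rw [der_iter_sum]
    apply Finset.sum_eq_zero
    intro m hm
    exact der_iter_zero_of_le _ (Finset.le_sup hm) (hf m)
  rw [← ha] at h2
  exact h2

section Quot

variable {P : Type*} [CommRing P] [Algebra K P]
variable (I : Ideal P) (Δ : Derivation K P P)

/-- auxiliary function: the descent of `Δ` to the quotient -/
noncomputable def qfun : P ⧸ I → P ⧸ I := fun a =>
  Ideal.Quotient.mk I (Δ (Function.surjInv Ideal.Quotient.mk_surjective a))

variable {I Δ} (hΔ : ∀ x ∈ I, Δ x ∈ I)

include hΔ in
lemma qfun_mk (p : P) : qfun I Δ (Ideal.Quotient.mk I p) = Ideal.Quotient.mk I (Δ p) := by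
  set p' := Function.surjInv (Ideal.Quotient.mk_surjective (I := I)) (Ideal.Quotient.mk I p)
    with hp'
  have h1 : Ideal.Quotient.mk I p' = Ideal.Quotient.mk I p :=
    Function.surjInv_eq Ideal.Quotient.mk_surjective _
  have h2 : p' - p ∈ I := Ideal.Quotient.eq.mp h1
  have h3 : Δ p' - Δ p ∈ I := by
    have := hΔ _ h2
    rwa [map_sub] at this
  exact Ideal.Quotient.eq.mpr h3

lemma mk_smul (c : K) (p : P) :
    Ideal.Quotient.mk I (c • p) = c • Ideal.Quotient.mk I p := by
  have := map_smul (Ideal.Quotient.mkₐ K I).toLinearMap c p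
  rw [AlgHom.toLinearMap_apply, AlgHom.toLinearMap_apply, Ideal.Quotient.mkₐ_eq_mk] at this
  exact this

/-- the descent of `Δ` to the quotient, as a derivation -/
noncomputable def qder : Derivation K (P ⧸ I) (P ⧸ I) where
  toFun := qfun I Δ
  map_add' x y := by
    obtain ⟨p, rfl⟩ := Ideal.Quotient.mk_surjective x
    obtain ⟨q, rfl⟩ := Ideal.Quotient.mk_surjective y
    rw [← map_add, qfun_mk hΔ, qfun_mk hΔ, qfun_mk hΔ, map_add, map_add]
  map_smul' c x := by
    obtain ⟨p, rfl⟩ := Ideal.Quotient.mk_surjective x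
    show qfun I Δ _ = c • qfun I Δ _
    rw [← mk_smul, qfun_mk hΔ, qfun_mk hΔ, Δ.map_smul, mk_smul]
  map_one_eq_zero' := by
    have h1 : (1 : P ⧸ I) = Ideal.Quotient.mk I 1 := rfl
    show qfun I Δ 1 = 0
    rw [h1, qfun_mk hΔ, show Δ 1 = 0 from Δ.map_one_eq_zero, map_zero]
  leibniz' x y := by
    obtain ⟨p, rfl⟩ := Ideal.Quotient.mk_surjective x
    obtain ⟨q, rfl⟩ := Ideal.Quotient.mk_surjective y
    show qfun I Δ _ = Ideal.Quotient.mk I p • qfun I Δ (Ideal.Quotient.mk I q)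
      + Ideal.Quotient.mk I q • qfun I Δ (Ideal.Quotient.mk I p)
    rw [← map_mul, qfun_mk hΔ, Derivation.leibniz, smul_eq_mul, smul_eq_mul, map_add,
      map_mul, map_mul, qfun_mk hΔ, qfun_mk hΔ, smul_eq_mul, smul_eq_mul]

lemma qder_mk (p : P) :
    qder hΔ (Ideal.Quotient.mk I p) = Ideal.Quotient.mk I (Δ p) := qfun_mk hΔ p

lemma qder_iter_mk (k : ℕ) (p : P) :
    (⇑(qder hΔ))^[k] (Ideal.Quotient.mk I p) = Ideal.Quotient.mk I ((⇑Δ)^[k] p) := by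
  induction k generalizing p with
  | zero => rfl
  | succ k ih => rw [Function.iterate_succ_apply, Function.iterate_succ_apply, qder_mk, ih]

lemma qder_LND (hl : IsLND Δ) : IsLND (qder hΔ) := by
  intro a
  obtain ⟨p, rfl⟩ := Ideal.Quotient.mk_surjective a
  obtain ⟨k, hk⟩ := hl p
  exact ⟨k, by rw [qder_iter_mk hΔ, hk, map_zero]⟩

end Quot

section Main

set_option synthInstance.maxHeartbeats 1000000

/-- the conclusion of the main theorem -/
def Concl (w : Fin n → ℕ) (R : MvPolynomial (Fin n) K) : Prop :=
  ∃ D' : Derivation K (MvPolynomial (Fin n) K ⧸ Ideal.span {R})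
      (MvPolynomial (Fin n) K ⧸ Ideal.span {R}),
    D' ≠ 0 ∧ IsLND D' ∧
    ∃ r : ℤ, ∀ (m : ℕ) (p : MvPolynomial (Fin n) K), p.IsWeightedHomogeneous w m →
      D' (Ideal.Quotient.mk (Ideal.span {R}) p) = 0 ∨
      (0 ≤ (m : ℤ) + r ∧ ∃ q : MvPolynomial (Fin n) K,
        q.IsWeightedHomogeneous w ((m : ℤ) + r).toNat ∧
        D' (Ideal.Quotient.mk (Ideal.span {R}) p) = Ideal.Quotient.mk (Ideal.span {R}) q)

lemma hom_bound {Δ : Derivation K (MvPolynomial (Fin n) K) (MvPolynomial (Fin n) K)} {s : ℤ}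
    (hΔ0 : Δ ≠ 0)
    (hΔh : ∀ (m : ℕ) (p : MvPolynomial (Fin n) K), p.IsWeightedHomogeneous w m →
      Δ p = cpt w ((m : ℤ) + s) (Δ p)) :
    -((Finset.univ.sup w : ℕ) : ℤ) ≤ s := by
  have : ∃ i, Δ (X i) ≠ 0 := by
    by_contra hc
    push_neg at hc
    exact hΔ0 (derivation_ext (by simpa using hc))
  obtain ⟨i, hi⟩ := this
  have h1 := hΔh (w i) (X i) (isWeightedHomogeneous_X K w i)
  rw [h1] at hi
  have h2 : (0 : ℤ) ≤ (w i : ℤ) + s := cpt_ne_zero_nonneg hi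
  have h3 : w i ≤ Finset.univ.sup w := by
    rcases n with - | n
    · exact absurd i.2 (by omega)
    · exact Finset.le_sup (Finset.mem_univ i)
  omega

lemma descend_case {R : MvPolynomial (Fin n) K}
    {Δ : Derivation K (MvPolynomial (Fin n) K) (MvPolynomial (Fin n) K)} {r : ℤ}
    (hΔl : IsLND Δ) (hΔR : Δ R = 0)
    (hΔh : ∀ (m : ℕ) (p : MvPolynomial (Fin n) K), p.IsWeightedHomogeneous w m →
      Δ p = cpt w ((m : ℤ) + r) (Δ p))
    (hcase : ∃ p, Δ p ∉ Ideal.span {R}) : Concl w R := by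
  have hΔI : ∀ x ∈ Ideal.span {R}, Δ x ∈ Ideal.span {R} := by
    intro x hx
    obtain ⟨c, rfl⟩ := Ideal.mem_span_singleton.mp hx
    rw [Derivation.leibniz, hΔR, smul_zero, add_zero, smul_eq_mul]
    exact Ideal.mem_span_singleton.mpr (Dvd.intro _ rfl)
  obtain ⟨p₀, hp₀⟩ := hcase
  refine ⟨qder hΔI, ?_, qder_LND hΔI hΔl, r, ?_⟩
  · intro h0
    apply hp₀
    have : qder hΔI (Ideal.Quotient.mk _ p₀) = 0 := by rw [h0]; rfl
    rw [qder_mk hΔI] at this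
    exact (Ideal.Quotient.eq_zero_iff_mem).mp this
  · intro m p hp
    rw [qder_mk hΔI]
    by_cases hneg : (m : ℤ) + r < 0
    · left
      rw [hΔh m p hp, cpt_neg hneg, map_zero]
    · right
      exact ⟨by omega, Δ p, hΔh m p hp ▸ cpt_isWH _ _, rfl⟩

lemma factor_case {R : MvPolynomial (Fin n) K} (hR0 : R ≠ 0) {m₀ : ℕ}
    (hhom : R.IsWeightedHomogeneous w m₀)
    {Δ : Derivation K (MvPolynomial (Fin n) K) (MvPolynomial (Fin n) K)} {r : ℤ}
    (hΔ0 : Δ ≠ 0) (hΔl : IsLND Δ) (hΔR : Δ R = 0)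
    (hΔh : ∀ (m : ℕ) (p : MvPolynomial (Fin n) K), p.IsWeightedHomogeneous w m →
      Δ p = cpt w ((m : ℤ) + r) (Δ p))
    (hcase : ∀ p, Δ p ∈ Ideal.span {R}) :
    ∃ E : Derivation K (MvPolynomial (Fin n) K) (MvPolynomial (Fin n) K),
      E ≠ 0 ∧ IsLND E ∧ E R = 0 ∧
      (∀ (m : ℕ) (p : MvPolynomial (Fin n) K), p.IsWeightedHomogeneous w m →
        E p = cpt w ((m : ℤ) + (r - m₀)) (E p)) := by
  choose g hg using fun i => (Ideal.mem_span_singleton.mp (hcase (X i)))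
  set E := mkDerivation K g with hE
  have hΔE : Δ = R • E := by
    apply derivation_ext
    intro i
    rw [Derivation.coe_smul, Pi.smul_apply, mkDerivation_X, smul_eq_mul]
    exact hg i
  have hΔapp : ∀ p, Δ p = R * E p := by
    intro p
    rw [hΔE, Derivation.coe_smul, Pi.smul_apply, smul_eq_mul]
  have hER : E R = 0 := by
    have := hΔR
    rw [hΔapp] at this
    rcases mul_eq_zero.mp this with h | h
    · exact absurd h hR0
    · exact h
  have hE0 : E ≠ 0 := by
    intro h
    apply hΔ0
    rw [hΔE, h, smul_zero]
  have hERk : ∀ k : ℕ, E (R ^ k) = 0 := by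
    intro k
    induction k with
    | zero => simpa using E.map_one_eq_zero
    | succ k ih => rw [pow_succ, Derivation.leibniz, ih, hER, smul_zero, smul_zero, add_zero]
  have hpow : ∀ (k : ℕ) (a : MvPolynomial (Fin n) K),
      (⇑Δ)^[k] a = R ^ k * (⇑E)^[k] a := by
    intro k
    induction k with
    | zero => intro a; simp
    | succ k ih =>
      intro a
      rw [Function.iterate_succ_apply', Function.iterate_succ_apply', ih, hΔapp,
        Derivation.leibniz, hERk, smul_zero, add_zero, smul_eq_mul, pow_succ]
      ring
  refine ⟨E, hE0, ?_, hER, ?_⟩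
  · intro a
    obtain ⟨k, hk⟩ := hΔl a
    rw [hpow] at hk
    rcases mul_eq_zero.mp hk with h | h
    · exact absurd h (pow_ne_zero k hR0)
    · exact ⟨k, h⟩
  · intro m p hp
    have h1 := hΔh m p hp
    rw [hΔapp] at h1
    have h2 : (m : ℤ) + r = (m₀ : ℤ) + ((m : ℤ) + (r - m₀)) := by omega
    rw [h2, cpt_isWH_mul hhom] at h1
    exact mul_left_cancel₀ hR0 h1

lemma main_ind {R : MvPolynomial (Fin n) K} (hR0 : R ≠ 0) {m₀ : ℕ} (hm₀ : 1 ≤ m₀)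
    (hhom : R.IsWeightedHomogeneous w m₀) :
    ∀ t : ℕ, ∀ r : ℤ,
    ∀ Δ : Derivation K (MvPolynomial (Fin n) K) (MvPolynomial (Fin n) K),
    Δ ≠ 0 → IsLND Δ → Δ R = 0 →
    (∀ (m : ℕ) (p : MvPolynomial (Fin n) K), p.IsWeightedHomogeneous w m →
      Δ p = cpt w ((m : ℤ) + r) (Δ p)) →
    (r + ((Finset.univ.sup w : ℕ) : ℤ)).toNat ≤ t → Concl w R := by
  intro t
  induction t with
  | zero =>
    intro r Δ hΔ0 hΔl hΔR hΔh hle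
    by_cases hcase : ∀ p, Δ p ∈ Ideal.span {R}
    · obtain ⟨E, hE0, _, _, hEh⟩ := factor_case hR0 hhom hΔ0 hΔl hΔR hΔh hcase
      have hb := hom_bound hE0 hEh
      have hb2 := hom_bound hΔ0 hΔh
      omega
    · push_neg at hcase
      exact descend_case hΔl hΔR hΔh hcase
  | succ t ih =>
    intro r Δ hΔ0 hΔl hΔR hΔh hle
    by_cases hcase : ∀ p, Δ p ∈ Ideal.span {R}
    · obtain ⟨E, hE0, hEl, hER, hEh⟩ := factor_case hR0 hhom hΔ0 hΔl hΔR hΔh hcase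
      have hb := hom_bound hE0 hEh
      exact ih (r - m₀) E hE0 hEl hER hEh (by omega)
    · push_neg at hcase
      exact descend_case hΔl hΔR hΔh hcase

end Main

end Stmt17Aux

open Stmt17Aux

set_option maxHeartbeats 1000000 in
set_option synthInstance.maxHeartbeats 1000000 in
/-- Lemma: if a `deg₁`-homogeneous irreducible nonconstant `R` is annihilated by a
nonzero locally nilpotent derivation of `K[x₁,…,xₙ]`, then the quotient
`A = K[x₁,…,xₙ]/(R)` carries a nonzero weighted homogeneous locally nilpotent
derivation (homogeneous of some degree `r` with respect to the induced grading). -/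
theorem stmt17 {K : Type*} [Field K] [IsAlgClosed K] [CharZero K]
    {n : ℕ} (w : Fin n → ℕ) (hw : ∀ i, 0 < w i)
    (R : MvPolynomial (Fin n) K) (hirr : Irreducible R)
    (m₀ : ℕ) (hhom : R.IsWeightedHomogeneous w m₀) (hnc : R ∉ Set.range (C : K → MvPolynomial (Fin n) K))
    (D : Derivation K (MvPolynomial (Fin n) K) (MvPolynomial (Fin n) K))
    (hD0 : D ≠ 0) (hDl : IsLND D) (hDR : D R = 0) :
    ∃ D' : Derivation K (MvPolynomial (Fin n) K ⧸ Ideal.span {R})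
        (MvPolynomial (Fin n) K ⧸ Ideal.span {R}),
      D' ≠ 0 ∧ IsLND D' ∧
      ∃ r : ℤ, ∀ (m : ℕ) (p : MvPolynomial (Fin n) K), p.IsWeightedHomogeneous w m →
        D' (Ideal.Quotient.mk (Ideal.span {R}) p) = 0 ∨
        (0 ≤ (m : ℤ) + r ∧ ∃ q : MvPolynomial (Fin n) K,
          q.IsWeightedHomogeneous w ((m : ℤ) + r).toNat ∧
          D' (Ideal.Quotient.mk (Ideal.span {R}) p) = Ideal.Quotient.mk (Ideal.span {R}) q) := by
  classical
  have hnt : Finsupp.NonTorsionWeight ℕ w := Finsupp.nonTorsionWeight_of (R := ℕ) (w := w) (fun i => (hw i).ne')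
  have hm₀ : 1 ≤ m₀ := by
    by_contra h
    have hm0 : m₀ = 0 := by omega
    apply hnc
    refine ⟨coeff 0 R, ?_⟩
    ext d
    rw [coeff_C]
    by_cases hd : d = 0
    · subst hd; rw [if_pos rfl]
    · rw [if_neg (by exact fun hh => hd hh.symm)]
      by_contra hcd
      haveI := hnt
      have hw0 := hhom (Ne.symm hcd)
      rw [hm0] at hw0
      exact hd ((Finsupp.weight_eq_zero_iff_eq_zero w).mp hw0)
  have hR0 : R ≠ 0 := hirr.ne_zero
  obtain ⟨rmin, hne, hmin⟩ := exists_rmin D hD0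
  set Δ := dcomp w D rmin with hΔdef
  have hΔh : ∀ (m : ℕ) (p : MvPolynomial (Fin n) K), p.IsWeightedHomogeneous w m →
      Δ p = cpt w ((m : ℤ) + rmin) (Δ p) := by
    intro m p hp
    have h1 := dcomp_apply D rmin hp
    rw [hΔdef, h1]
    by_cases hb : 0 ≤ (m : ℤ) + rmin
    · rw [cpt_cpt _ _ _ hb, if_pos rfl]
    · rw [cpt_neg (by omega), cpt_neg (by omega)]
  have hΔR : Δ R = 0 := by
    rw [hΔdef, dcomp_apply D rmin hhom, hDR, cpt_zero]
  have hΔl : IsLND Δ := dcomp_min_LND D hmin hDl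
  have h := main_ind hR0 hm₀ hhom
    ((rmin + ((Finset.univ.sup w : ℕ) : ℤ)).toNat) rmin Δ hne hΔl hΔR hΔh le_rfl
  exact h
end
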